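/- Let M ∈ ℝ^{n×n} be a real square matrix, τ > 0, and let Q ∈ ℝ^{n×n} be symmetric positive definite such that the symmetric block matrix [[τ(M Q + Q Mᵀ), M Q − Q Mᵀ], [Q Mᵀ − M Q, τ(M Q + Q Mᵀ)]] ∈ ℝ^{2n×2n} is negative definite. Then every eigenvalue μ ∈ ℂ of M (i.e., every eigenvalue of the complexification of M) satisfies |Im μ| < −τ · Re μ; in particular Re μ < 0 and μ lies in the open conic sector around the negative real axis with half-angle arctan(1/τ). -/

import Mathlib

open Matrix

/-- A real symmetric matrix is negative definite if `xᵀ M x < 0` for all `x ≠ 0`. -/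
def Matrix.NegDefR {n : Type*} [Fintype n] (M : Matrix n n ℝ) : Prop :=
  M.IsHermitian ∧ ∀ x : n → ℝ, x ≠ 0 → x ⬝ᵥ (M *ᵥ x) < 0

set_option maxHeartbeats 1600000 in
theorem conic_sector_pole_constraint
    (n : ℕ) (M : Matrix (Fin n) (Fin n) ℝ) (τ : ℝ) (hτ : 0 < τ)
    (Q : Matrix (Fin n) (Fin n) ℝ) (hQ : Q.PosDef)
    (hLMI : (Matrix.fromBlocks (τ • (M * Q + Q * Mᵀ)) (M * Q - Q * Mᵀ)
        (Q * Mᵀ - M * Q) (τ • (M * Q + Q * Mᵀ))).NegDefR) :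
    ∀ μ : ℂ, μ ∈ spectrum ℂ (M.map (Complex.ofReal)) →
      |μ.im| < -τ * μ.re ∧ μ.re < 0 := by
  intro μ hμ
  obtain ⟨-, hneg⟩ := hLMI
  -- extract an eigenvector of the transpose
  have hdet : ((μ • (1 : Matrix (Fin n) (Fin n) ℂ) - M.map Complex.ofReal)).det = 0 := by
    rw [spectrum.mem_iff, Algebra.algebraMap_eq_smul_one] at hμ
    by_contra h
    exact hμ ((Matrix.isUnit_iff_isUnit_det _).mpr (isUnit_iff_ne_zero.mpr h))
  have hdetT : ((μ • (1 : Matrix (Fin n) (Fin n) ℂ) - M.map Complex.ofReal)ᵀ).det = 0 := by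
    rwa [Matrix.det_transpose]
  obtain ⟨w, hw0, hw⟩ := Matrix.exists_mulVec_eq_zero_iff.mpr hdetT
  have heig : (Mᵀ.map Complex.ofReal) *ᵥ w = μ • w := by
    have := hw
    rw [Matrix.transpose_sub, Matrix.transpose_smul, Matrix.transpose_one,
      Matrix.sub_mulVec, Matrix.smul_mulVec, Matrix.one_mulVec,
      sub_eq_zero, ← Matrix.transpose_map] at this
    exact this.symm
  set a : Fin n → ℝ := fun i => (w i).re with ha_def
  set b : Fin n → ℝ := fun i => (w i).im with hb_def
  set α := μ.re
  set β := μ.im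
  -- real and imaginary parts of the eigen-equation
  have hMa : Mᵀ *ᵥ a = α • a - β • b := by
    funext j
    have := congrFun heig j
    have hre := congrArg Complex.re this
    simp only [Matrix.mulVec, dotProduct, Matrix.map_apply, Complex.re_sum,
      Complex.re_ofReal_mul, Pi.smul_apply, Complex.smul_re, smul_eq_mul,
      Complex.mul_re, Complex.ofReal_re, Complex.ofReal_im, zero_mul, mul_zero,
      sub_zero, add_zero] at hre ⊢
    simp only [Pi.sub_apply, Pi.smul_apply, smul_eq_mul]
    show _ = μ.re * (w j).re - μ.im * (w j).im
    linarith [hre]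
  have hMb : Mᵀ *ᵥ b = β • a + α • b := by
    funext j
    have := congrFun heig j
    have him := congrArg Complex.im this
    simp only [Matrix.mulVec, dotProduct, Matrix.map_apply, Complex.im_sum,
      Complex.im_ofReal_mul, Pi.smul_apply, smul_eq_mul, Complex.mul_im,
      Complex.ofReal_re, Complex.ofReal_im, zero_mul, mul_zero,
      sub_zero, add_zero, zero_add] at him ⊢
    simp only [Pi.add_apply, Pi.smul_apply, smul_eq_mul]
    show _ = μ.im * (w j).re + μ.re * (w j).im
    linarith [him]
  -- Q is symmetric
  have hQsymm : Qᵀ = Q := by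
    have := hQ.1
    rwa [Matrix.IsHermitian, Matrix.conjTranspose_eq_transpose_of_trivial] at this
  -- abbreviations
  set qaa := a ⬝ᵥ (Q *ᵥ a) with hqaa
  set qab := a ⬝ᵥ (Q *ᵥ b) with hqab
  set qbb := b ⬝ᵥ (Q *ᵥ b) with hqbb
  have hsym : b ⬝ᵥ (Q *ᵥ a) = qab := by
    rw [hqab, Matrix.dotProduct_mulVec, ← Matrix.mulVec_transpose, hQsymm,
      dotProduct_comm]
  -- generic dot product reductions
  have hMQ : ∀ x y : Fin n → ℝ, x ⬝ᵥ ((M * Q) *ᵥ y) = (Mᵀ *ᵥ x) ⬝ᵥ (Q *ᵥ y) := by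
    intro x y
    rw [← Matrix.mulVec_mulVec, Matrix.dotProduct_mulVec, ← Matrix.mulVec_transpose]
  have hQM : ∀ x y : Fin n → ℝ, x ⬝ᵥ ((Q * Mᵀ) *ᵥ y) = x ⬝ᵥ (Q *ᵥ (Mᵀ *ᵥ y)) := by
    intro x y
    rw [← Matrix.mulVec_mulVec]
  -- p > 0
  have hnonneg := fun x => hQ.posSemidef.dotProduct_mulVec_nonneg x
  have hp : 0 < qaa + qbb := by
    have hwa : a ≠ 0 ∨ b ≠ 0 := by
      by_contra h
      push_neg at h
      apply hw0
      funext i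
      have h1 : a i = 0 := by rw [h.1]; rfl
      have h2 : b i = 0 := by rw [h.2]; rfl
      exact Complex.ext h1 h2
    have h1 : 0 ≤ qaa := by simpa using hnonneg a
    have h2 : 0 ≤ qbb := by simpa using hnonneg b
    rcases hwa with h | h
    · have := hQ.dotProduct_mulVec_pos h; simp only [star_trivial] at this; linarith
    · have := hQ.dotProduct_mulVec_pos h; simp only [star_trivial] at this; linarith
  -- the LMI quadratic form at (x, y)
  have key : ∀ x y : Fin n → ℝ, ¬(x = 0 ∧ y = 0) →
      τ * (x ⬝ᵥ ((M * Q) *ᵥ x) + x ⬝ᵥ ((Q * Mᵀ) *ᵥ x)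
        + y ⬝ᵥ ((M * Q) *ᵥ y) + y ⬝ᵥ ((Q * Mᵀ) *ᵥ y))
      + (x ⬝ᵥ ((M * Q) *ᵥ y) - x ⬝ᵥ ((Q * Mᵀ) *ᵥ y))
      + (y ⬝ᵥ ((Q * Mᵀ) *ᵥ x) - y ⬝ᵥ ((M * Q) *ᵥ x)) < 0 := by
    intro x y hxy
    have hz : Sum.elim x y ≠ 0 := by
      intro h
      apply hxy
      constructor
      · funext i; exact congrFun h (Sum.inl i)
      · funext i; exact congrFun h (Sum.inr i)
    have := hneg (Sum.elim x y) hz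
    rw [Matrix.fromBlocks_mulVec, sumElim_dotProduct_sumElim] at this
    simp only [Matrix.add_mulVec, Matrix.sub_mulVec, Matrix.smul_mulVec,
      dotProduct_add, dotProduct_sub, dotProduct_smul,
      smul_eq_mul, Sum.elim_comp_inl, Sum.elim_comp_inr] at this
    linarith
  -- evaluate all the scalar dot products
  have e1 : a ⬝ᵥ ((M * Q) *ᵥ a) = α * qaa - β * qab := by
    rw [hMQ, hMa]; simp [sub_dotProduct, smul_dotProduct, hsym, hqaa, hqab, hqbb]
  have e2 : a ⬝ᵥ ((Q * Mᵀ) *ᵥ a) = α * qaa - β * qab := by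
    rw [hQM, hMa]
    simp [Matrix.mulVec_sub, Matrix.mulVec_smul, dotProduct_sub,
      dotProduct_smul, hqaa, hqab, hqbb]
  have e3 : b ⬝ᵥ ((M * Q) *ᵥ b) = β * qab + α * qbb := by
    rw [hMQ, hMb]; simp [add_dotProduct, smul_dotProduct, hqaa, hqab, hqbb]
  have e4 : b ⬝ᵥ ((Q * Mᵀ) *ᵥ b) = β * qab + α * qbb := by
    rw [hQM, hMb]
    simp [Matrix.mulVec_add, Matrix.mulVec_smul, dotProduct_add,
      dotProduct_smul, hsym, hqaa, hqab, hqbb]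
  have e5 : a ⬝ᵥ ((M * Q) *ᵥ b) = α * qab - β * qbb := by
    rw [hMQ, hMa]; simp [sub_dotProduct, smul_dotProduct, hsym, hqaa, hqab, hqbb]
  have e6 : a ⬝ᵥ ((Q * Mᵀ) *ᵥ b) = β * qaa + α * qab := by
    rw [hQM, hMb]
    simp [Matrix.mulVec_add, Matrix.mulVec_smul, dotProduct_add,
      dotProduct_smul, hqaa, hqab, hqbb]
  have e7 : b ⬝ᵥ ((M * Q) *ᵥ a) = β * qaa + α * qab := by
    rw [hMQ, hMb]; simp [add_dotProduct, smul_dotProduct, hsym, hqaa, hqab, hqbb]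
  have e8 : b ⬝ᵥ ((Q * Mᵀ) *ᵥ a) = α * qab - β * qbb := by
    rw [hQM, hMa]
    simp [Matrix.mulVec_sub, Matrix.mulVec_smul, dotProduct_sub,
      dotProduct_smul, hsym, hqaa, hqab, hqbb]
  have hab : ¬(a = 0 ∧ b = 0) := by
    rintro ⟨h1, h2⟩
    apply hw0
    funext i
    have ha0 : a i = 0 := by rw [h1]; rfl
    have hb0 : b i = 0 := by rw [h2]; rfl
    exact Complex.ext ha0 hb0
  have hab' : ¬(a = 0 ∧ -b = 0) := by
    rintro ⟨h1, h2⟩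
    exact hab ⟨h1, by simpa using congrArg Neg.neg h2⟩
  have ineq1 := key a b hab
  rw [e1, e2, e3, e4, e5, e6, e7, e8] at ineq1
  have ineq2 := key a (-b) hab'
  simp only [Matrix.mulVec_neg, dotProduct_neg, neg_dotProduct,
    neg_neg] at ineq2
  rw [e1, e2, e3, e4, e5, e6, e7, e8] at ineq2
  have hα : α < 0 := by nlinarith [mul_pos hτ hp]
  refine ⟨?_, hα⟩
  rw [abs_lt]
  constructor <;> nlinarith [hp, mul_pos hτ hp]
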